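/- Let K be a field, let n_1, …, n_r and m_1, …, m_k be non-negative integers (r, k ≥ 1), and write N_α = n_1 + ⋯ + n_α (with N_0 = 0) and M_β = m_1 + ⋯ + m_β (with M_0 = 0). Then the product of ideals I(n_1,…,n_r)·I(m_1,…,m_k) in K[x,y] equals the ideal generated by the monomials x^{r+k−i} y^{L_i} for i = 0, 1, …, r+k, where L_i = min over all α + β = i with 0 ≤ α ≤ r and 0 ≤ β ≤ k of N_α + M_β. In particular, this product is again an ideal of the form I(l_1, …, l_{r+k}), with l_i = L_i − L_{i−1}. -/

import Mathlib

open MvPolynomial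

/-- The staircase monomial ideal `I(n_1,…,n_r) = (x^r, x^{r-1}y^{n_1}, …, y^{n_1+⋯+n_r})`
of `K[x,y]`, where `n i` (0-indexed) is `n_{i+1}`:  it is generated by the monomials
`x^{r-j} y^{n_1+⋯+n_j}` for `j = 0, 1, …, r`. -/
noncomputable def stairIdeal (K : Type*) [Field K] (r : ℕ) (n : ℕ → ℕ) :
    Ideal (MvPolynomial (Fin 2) K) :=
  Ideal.span
    ((fun j => (X 0 : MvPolynomial (Fin 2) K) ^ (r - j)
        * (X 1 : MvPolynomial (Fin 2) K) ^ (∑ i ∈ Finset.range j, n i)) '' Set.Iic r)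

/-- Writing `N_α = n_1 + ⋯ + n_α` and `M_β = m_1 + ⋯ + m_β`, the product
`I(n_1,…,n_r)·I(m_1,…,m_k)` equals the ideal generated by the monomials
`x^{r+k-i} y^{L_i}` for `i = 0, …, r+k`, where `L_i = min_{α+β=i, α≤r, β≤k} (N_α + M_β)`.
In particular it is again a staircase ideal `I(l_1,…,l_{r+k})` with `l_i = L_i - L_{i-1}`. -/
theorem stairIdeal_mul
    (K : Type*) [Field K] (r k : ℕ) (hr : 1 ≤ r) (hk : 1 ≤ k) (n m : ℕ → ℕ) :
    let N : ℕ → ℕ := fun α => ∑ i ∈ Finset.range α, n i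
    let M : ℕ → ℕ := fun β => ∑ i ∈ Finset.range β, m i
    let L : ℕ → ℕ := fun i =>
      sInf {v | ∃ α β : ℕ, α + β = i ∧ α ≤ r ∧ β ≤ k ∧ v = N α + M β}
    stairIdeal K r n * stairIdeal K k m =
        Ideal.span
          ((fun i => (X 0 : MvPolynomial (Fin 2) K) ^ (r + k - i)
              * (X 1 : MvPolynomial (Fin 2) K) ^ (L i)) '' Set.Iic (r + k)) ∧
      stairIdeal K r n * stairIdeal K k m
        = stairIdeal K (r + k) (fun i => L (i + 1) - L i) := by
  intro N M L
  have hNstep : ∀ a, N a ≤ N (a + 1) := fun a => by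
    simp only [N, Finset.sum_range_succ]; exact Nat.le_add_right _ _
  have hMstep : ∀ a, M a ≤ M (a + 1) := fun a => by
    simp only [M, Finset.sum_range_succ]; exact Nat.le_add_right _ _
  have hLle : ∀ i α β, α + β = i → α ≤ r → β ≤ k → L i ≤ N α + M β :=
    fun i α β h hα hβ => Nat.sInf_le ⟨α, β, h, hα, hβ, rfl⟩
  have hLmem : ∀ i, i ≤ r + k → ∃ α β, α + β = i ∧ α ≤ r ∧ β ≤ k ∧ L i = N α + M β := by
    intro i hi
    have hne : {v | ∃ α β : ℕ, α + β = i ∧ α ≤ r ∧ β ≤ k ∧ v = N α + M β}.Nonempty :=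
      ⟨N (min i r) + M (i - min i r), min i r, i - min i r, by omega, by omega, by omega, rfl⟩
    exact Nat.sInf_mem hne
  have hL0 : L 0 = 0 := by
    have h := hLle 0 0 0 rfl (by omega) (by omega)
    simp only [N, M, Finset.range_zero, Finset.sum_empty] at h
    omega
  have hLmono : ∀ i, i + 1 ≤ r + k → L i ≤ L (i + 1) := by
    intro i hi
    obtain ⟨α, β, hab, hα, hβ, heq⟩ := hLmem (i + 1) hi
    rcases Nat.eq_zero_or_pos α with h0 | hpos
    · subst h0
      have h := hLle i 0 (β - 1) (by omega) (by omega) (by omega)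
      have hM := hMstep (β - 1)
      have hb : β - 1 + 1 = β := by omega
      rw [hb] at hM
      omega
    · have h := hLle i (α - 1) β (by omega) (by omega) hβ
      have hN := hNstep (α - 1)
      have ha : α - 1 + 1 = α := by omega
      rw [ha] at hN
      omega
  have key : stairIdeal K r n * stairIdeal K k m =
      Ideal.span
        ((fun i => (X 0 : MvPolynomial (Fin 2) K) ^ (r + k - i)
            * (X 1 : MvPolynomial (Fin 2) K) ^ (L i)) '' Set.Iic (r + k)) := by
    rw [stairIdeal, stairIdeal, Ideal.span_mul_span']
    apply le_antisymm
    · rw [Ideal.span_le]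
      rintro _ ⟨_, ⟨α, hα, rfl⟩, _, ⟨β, hβ, rfl⟩, rfl⟩
      simp only [Set.mem_Iic] at hα hβ
      have hLi := hLle (α + β) α β rfl hα hβ
      have hmem : (X 0 : MvPolynomial (Fin 2) K) ^ (r + k - (α + β))
          * (X 1 : MvPolynomial (Fin 2) K) ^ (L (α + β)) ∈
          Ideal.span ((fun i => (X 0 : MvPolynomial (Fin 2) K) ^ (r + k - i)
            * (X 1 : MvPolynomial (Fin 2) K) ^ (L i)) '' Set.Iic (r + k)) :=
        Ideal.subset_span (Set.mem_image_of_mem _ (by simp only [Set.mem_Iic]; omega))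
      have heq : ((X 0 : MvPolynomial (Fin 2) K) ^ (r - α) * (X 1) ^ (N α))
          * ((X 0) ^ (k - β) * (X 1) ^ (M β))
          = ((X 0) ^ (r + k - (α + β)) * (X 1) ^ (L (α + β)))
            * (X 1) ^ (N α + M β - L (α + β)) := by
        rw [show r + k - (α + β) = (r - α) + (k - β) by omega]
        have h2 : L (α + β) + (N α + M β - L (α + β)) = N α + M β := by omega
        conv_rhs => rw [mul_assoc, ← pow_add, h2]
        ring
      show (X 0 : MvPolynomial (Fin 2) K) ^ (r - α) * X 1 ^ N α
          * (X 0 ^ (k - β) * X 1 ^ M β) ∈ _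
      rw [heq]
      exact SetLike.mem_coe.mpr (Ideal.mul_mem_right _ _ hmem)
    · rw [Ideal.span_le]
      rintro _ ⟨i, hi, rfl⟩
      simp only [Set.mem_Iic] at hi
      obtain ⟨α, β, hab, hα, hβ, heq⟩ := hLmem i hi
      have hprod : ((X 0 : MvPolynomial (Fin 2) K) ^ (r - α) * (X 1) ^ (N α))
          * ((X 0) ^ (k - β) * (X 1) ^ (M β))
          = (X 0) ^ (r + k - i) * (X 1) ^ (L i) := by
        rw [show r + k - i = (r - α) + (k - β) by omega, heq, pow_add, pow_add]
        ring
      show (X 0 : MvPolynomial (Fin 2) K) ^ (r + k - i) * X 1 ^ L i ∈ _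
      rw [← hprod]
      exact SetLike.mem_coe.mpr (Ideal.subset_span (Set.mul_mem_mul
        (Set.mem_image_of_mem _ (by simp only [Set.mem_Iic]; omega))
        (Set.mem_image_of_mem _ (by simp only [Set.mem_Iic]; omega))))
  have hsum : ∀ j, j ≤ r + k → ∑ i ∈ Finset.range j, (L (i + 1) - L i) = L j := by
    intro j
    induction j with
    | zero => intro _; simp [hL0]
    | succ j ih =>
      intro hj
      rw [Finset.sum_range_succ, ih (by omega)]
      have := hLmono j hj
      omega
  refine ⟨key, ?_⟩
  rw [key, stairIdeal]
  congr 1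
  apply Set.image_congr
  intro j hj
  simp only [Set.mem_Iic] at hj
  rw [hsum j hj]
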